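/- Let T be a non-empty binary search tree and let I be a non-empty finite subset of ℝ ∖ V(T) such that V(T) 1-chunks I. Let T' be the tree obtained from T by applying BulkInsert(I). Then T' contains T: σ_{T'}(x) = σ_T(x) for every x ∈ V(T); and h(T') ≤ h(T) + 1. -/

import Mathlib

attribute [local instance] Classical.propDecidable

/-- A binary tree with real-number node values. -/
inductive BT : Type
  | leaf : BT
  | node : BT → ℝ → BT → BT

namespace BT

/-- The set of values stored in the tree. -/
noncomputable def nodes : BT → Finset ℝ
  | .leaf => ∅
  | .node l v r => insert v (nodes l ∪ nodes r)

/-- The signature of `x` in the tree: the bit string of the search path for `x`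
(`false` = step to a left child, `true` = step to a right child). For a node `x` of the
tree, its length is the depth `d_T(x)`. -/
noncomputable def sig : BT → ℝ → List Bool
  | .leaf, _ => []
  | .node l v r, x =>
    if x < v then false :: sig l x
    else if v < x then true :: sig r x
    else []

/-- The number of nodes of the tree. -/
def size : BT → ℕ
  | .leaf => 0
  | .node l _ r => size l + size r + 1

/-- The binary-search-tree property: all values in a left subtree are smaller than the
value at the node, all values in a right subtree are larger. -/
def isBST : BT → Prop
  | .leaf => True
  | .node l v r => (∀ x ∈ nodes l, x < v) ∧ (∀ x ∈ nodes r, v < x) ∧ isBST l ∧ isBST r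

/-- The height of the tree: the maximum depth of a node (0 for the empty tree). -/
noncomputable def height (t : BT) : ℕ := (nodes t).sup fun x => (sig t x).length

/-- The subtree rooted at the node holding the value `x` (a leaf if `x` is absent). -/
noncomputable def subtreeAt : BT → ℝ → BT
  | .leaf, _ => .leaf
  | .node l v r, x =>
    if x < v then subtreeAt l x
    else if v < x then subtreeAt r x
    else .node l v r

end BT

/-- `Chunks a X Y` : the finite set `X` `a`-chunks the finite set `Y`, i.e. every
`(a+1)`-element subset `S ⊆ Y` admits an `x ∈ X` with `min S ≤ x ≤ max S`
(equivalently, `s₁ ≤ x ≤ s₂` for some `s₁, s₂ ∈ S`). -/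
def Chunks (a : ℕ) (X Y : Finset ℝ) : Prop :=
  ∀ S ⊆ Y, S.card = a + 1 → ∃ x ∈ X, (∃ s ∈ S, s ≤ x) ∧ ∃ s ∈ S, x ≤ s

namespace BT

/-- Standard binary search tree insertion: the new value is attached at the external
node ending its search path. -/
noncomputable def ins : BT → ℝ → BT
  | .leaf, x => .node .leaf x .leaf
  | .node l v r, x =>
    if x < v then .node (ins l x) v r
    else if v < x then .node l v (ins r x)
    else .node l v r

end BT

/-- `t'` is obtained from `t` by `BulkInsert(I)`: inserting the elements of the finite
set `I` one by one, in some order, by standard binary search tree insertion. -/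
def BulkInsertRel (t : BT) (I : Finset ℝ) (t' : BT) : Prop :=
  ∃ l : List ℝ, l.Nodup ∧ l.toFinset = I ∧ t' = l.foldl BT.ins t

namespace BT

lemma nodes_ins (s : BT) (y : ℝ) : (s.ins y).nodes = insert y s.nodes := by
  induction s with
  | leaf => simp [ins, nodes]
  | node l v r ihl ihr =>
    by_cases h1 : y < v
    · simp only [ins, if_pos h1, nodes, ihl]
      ext a; simp; tauto
    · by_cases h2 : v < y
      · simp only [ins, if_neg h1, if_pos h2, nodes, ihr]
        ext a; simp; tauto
      · have hvy : y = v := le_antisymm (not_lt.1 h2) (not_lt.1 h1)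
        subst hvy
        simp [ins, nodes, Finset.insert_idem]

lemma isBST_ins (s : BT) (y : ℝ) (h : s.isBST) : (s.ins y).isBST := by
  induction s with
  | leaf => simp [ins, isBST, nodes]
  | node l v r ihl ihr =>
    obtain ⟨hl, hr, hbl, hbr⟩ := h
    by_cases h1 : y < v
    · simp only [ins, if_pos h1, isBST]
      refine ⟨?_, hr, ihl hbl, hbr⟩
      intro x hx
      rw [nodes_ins] at hx
      rcases Finset.mem_insert.1 hx with rfl | hx
      · exact h1
      · exact hl x hx
    · by_cases h2 : v < y
      · simp only [ins, if_neg h1, if_pos h2, isBST]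
        refine ⟨hl, ?_, hbl, ihr hbr⟩
        intro x hx
        rw [nodes_ins] at hx
        rcases Finset.mem_insert.1 hx with rfl | hx
        · exact h2
        · exact hr x hx
      · simp only [ins, if_neg h1, if_neg h2]
        exact ⟨hl, hr, hbl, hbr⟩

lemma sig_ins_self (s : BT) (y : ℝ) : (s.ins y).sig y = s.sig y := by
  induction s with
  | leaf => simp [ins, sig]
  | node l v r ihl ihr =>
    by_cases h1 : y < v
    · simp [ins, sig, h1, ihl]
    · by_cases h2 : v < y
      · simp [ins, sig, h1, h2, ihr]
      · simp [ins, sig, h1, h2]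

lemma sig_ins_between (s : BT) (x y : ℝ) (hbst : s.isBST)
    (h : ∃ z ∈ s.nodes, min x y ≤ z ∧ z ≤ max x y) :
    (s.ins y).sig x = s.sig x := by
  induction s with
  | leaf => simp [nodes] at h
  | node l v r ihl ihr =>
    obtain ⟨hl, hr, hbl, hbr⟩ := hbst
    by_cases h1 : y < v
    · by_cases h2 : x < v
      · obtain ⟨z, hz, hz1, hz2⟩ := h
        have hzv : z < v := lt_of_le_of_lt hz2 (max_lt h2 h1)
        have hzl : z ∈ l.nodes := by
          rcases Finset.mem_insert.1 hz with rfl | hz'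
          · exact absurd hzv (lt_irrefl _)
          · rcases Finset.mem_union.1 hz' with h' | h'
            · exact h'
            · exact absurd hzv (not_lt.2 (le_of_lt (hr z h')))
        simp [ins, sig, h1, h2, ihl hbl ⟨z, hzl, hz1, hz2⟩]
      · simp [ins, sig, h1, h2]
    · by_cases h2 : v < y
      · by_cases h3 : v < x
        · obtain ⟨z, hz, hz1, hz2⟩ := h
          have hzv : v < z := lt_of_lt_of_le (lt_min h3 h2) hz1
          have hzr : z ∈ r.nodes := by
            rcases Finset.mem_insert.1 hz with rfl | hz'
            · exact absurd hzv (lt_irrefl _)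
            · rcases Finset.mem_union.1 hz' with h' | h'
              · exact absurd hzv (not_lt.2 (le_of_lt (hl z h')))
              · exact h'
          simp [ins, sig, h1, h2, (asymm h3 : ¬ x < v), ihr hbr ⟨z, hzr, hz1, hz2⟩]
        · simp [ins, sig, h1, h2, h3]
      · simp [ins, sig, h1, h2]

lemma nodes_nonempty_node (l : BT) (v : ℝ) (r : BT) : (BT.node l v r).nodes.Nonempty :=
  ⟨v, by simp [nodes]⟩

lemma height_left_le (l : BT) (v : ℝ) (r : BT) (h : (BT.node l v r).isBST)
    (hne : l.nodes.Nonempty) : l.height + 1 ≤ (BT.node l v r).height := by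
  obtain ⟨y, hy, hy2⟩ := Finset.exists_mem_eq_sup l.nodes hne (fun x => (l.sig x).length)
  have hyv : y < v := h.1 y hy
  have hmem : y ∈ (BT.node l v r).nodes := by simp [nodes, hy]
  have hs : (BT.node l v r).sig y = false :: l.sig y := by simp [sig, hyv]
  have := Finset.le_sup (f := fun x => ((BT.node l v r).sig x).length) hmem
  simp only [hs, List.length_cons] at this
  rw [height, height, hy2]
  simpa using this

lemma height_right_le (l : BT) (v : ℝ) (r : BT) (h : (BT.node l v r).isBST)
    (hne : r.nodes.Nonempty) : r.height + 1 ≤ (BT.node l v r).height := by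
  obtain ⟨y, hy, hy2⟩ := Finset.exists_mem_eq_sup r.nodes hne (fun x => (r.sig x).length)
  have hyv : v < y := h.2.1 y hy
  have hmem : y ∈ (BT.node l v r).nodes := by simp [nodes, hy]
  have hs : (BT.node l v r).sig y = true :: r.sig y := by simp [sig, asymm hyv, hyv]
  have := Finset.le_sup (f := fun x => ((BT.node l v r).sig x).length) hmem
  simp only [hs, List.length_cons] at this
  rw [height, height, hy2]
  simpa using this

lemma sig_length_le (t : BT) (ht : t.isBST) (x : ℝ) :
    (t.sig x).length ≤ t.height + 1 := by
  induction t with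
  | leaf => simp [sig]
  | node l v r ihl ihr =>
    obtain ⟨hl, hr, hbl, hbr⟩ := ht
    by_cases h1 : x < v
    · simp only [sig, if_pos h1, List.length_cons]
      cases l with
      | leaf => simp [sig]
      | node a b c =>
        have h2 := ihl hbl
        have h3 := height_left_le _ v r ⟨hl, hr, hbl, hbr⟩ (nodes_nonempty_node a b c)
        omega
    · by_cases h2 : v < x
      · simp only [sig, if_neg h1, if_pos h2, List.length_cons]
        cases r with
        | leaf => simp [sig]
        | node a b c =>
          have h3 := ihr hbr
          have h4 := height_right_le l v _ ⟨hl, hr, hbl, hbr⟩ (nodes_nonempty_node a b c)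
          omega
      · simp [sig, h1, h2]

lemma foldl_nodes (l : List ℝ) (s : BT) :
    (l.foldl ins s).nodes = s.nodes ∪ l.toFinset := by
  induction l generalizing s with
  | nil => simp
  | cons y l ih =>
    rw [List.foldl_cons, ih, nodes_ins]
    ext a; simp; try tauto

lemma foldl_bst (l : List ℝ) (s : BT) (h : s.isBST) : (l.foldl ins s).isBST := by
  induction l generalizing s with
  | nil => exact h
  | cons y l ih => exact ih _ (isBST_ins s y h)

lemma foldl_sig (t : BT) (x : ℝ) (l : List ℝ) (s : BT) (hs : s.isBST)
    (hsub : t.nodes ⊆ s.nodes)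
    (hw : ∀ y ∈ l, ∃ z ∈ t.nodes, min x y ≤ z ∧ z ≤ max x y) :
    (l.foldl ins s).sig x = s.sig x := by
  induction l generalizing s with
  | nil => rfl
  | cons y l ih =>
    have h1 : (ins s y).sig x = s.sig x := by
      obtain ⟨z, hz, hz1, hz2⟩ := hw y List.mem_cons_self
      exact sig_ins_between s x y hs ⟨z, hsub hz, hz1, hz2⟩
    rw [List.foldl_cons,
      ih (ins s y) (isBST_ins s y hs)
        (fun a ha => by rw [nodes_ins]; exact Finset.mem_insert_of_mem (hsub ha))
        (fun y' hy' => hw y' (List.mem_cons_of_mem _ hy')), h1]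

end BT

open BT in
/-- bulk insertion preserves structure: if `V(T)` 1-chunks `I` and
`T'` is obtained from `T` by `BulkInsert(I)` (inserting the elements of `I` in any
order), then `T'` contains `T` (signatures of old nodes are unchanged) and
`h(T') ≤ h(T) + 1`. -/
theorem bulkInsert_contains_and_height (t : BT) (ht : t.isBST)
    (htne : t.nodes.Nonempty) (I : Finset ℝ) (hIne : I.Nonempty)
    (hdisj : ∀ x ∈ I, x ∉ t.nodes) (hchunk : Chunks 1 t.nodes I)
    (t' : BT) (h' : BulkInsertRel t I t') :
    (∀ x ∈ t.nodes, t'.sig x = t.sig x) ∧ t'.height ≤ t.height + 1 := by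
  obtain ⟨l, hnd, hfin, rfl⟩ := h'
  have hmemI : ∀ y ∈ l, y ∈ I := fun y hy => hfin ▸ List.mem_toFinset.2 hy
  -- between witness for distinct pairs of I
  have hbet : ∀ x ∈ I, ∀ y ∈ I, x ≠ y →
      ∃ z ∈ t.nodes, min x y ≤ z ∧ z ≤ max x y := by
    intro x hx y hy hxy
    have hsub : ({x, y} : Finset ℝ) ⊆ I := by
      intro a ha
      rcases Finset.mem_insert.1 ha with rfl | ha
      · exact hx
      · rw [Finset.mem_singleton] at ha; subst ha; exact hy
    have hcard : ({x, y} : Finset ℝ).card = 2 := by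
      rw [Finset.card_insert_of_notMem (by simpa using hxy), Finset.card_singleton]
    obtain ⟨z, hz, ⟨s1, hs1, hs1le⟩, ⟨s2, hs2, hs2le⟩⟩ := hchunk {x, y} hsub hcard
    refine ⟨z, hz, ?_, ?_⟩
    · rcases Finset.mem_insert.1 hs1 with rfl | hs1
      · exact le_trans (min_le_left _ _) hs1le
      · rw [Finset.mem_singleton] at hs1; subst hs1
        exact le_trans (min_le_right _ _) hs1le
    · rcases Finset.mem_insert.1 hs2 with rfl | hs2
      · exact le_trans hs2le (le_max_left _ _)
      · rw [Finset.mem_singleton] at hs2; subst hs2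
        exact le_trans hs2le (le_max_right _ _)
  have hsig_old : ∀ x ∈ t.nodes, (l.foldl ins t).sig x = t.sig x := by
    intro x hx
    refine foldl_sig t x l t ht (le_refl _) ?_
    intro y hy
    exact ⟨x, hx, min_le_left _ _, le_max_left _ _⟩
  have hsig_new : ∀ x ∈ I, (l.foldl ins t).sig x = t.sig x := by
    intro x hx
    have hxl : x ∈ l := by rw [← hfin] at hx; exact List.mem_toFinset.1 hx
    obtain ⟨l1, l2, rfl⟩ := List.append_of_mem hxl
    have hnd' := hnd
    rw [List.nodup_append] at hnd'
    obtain ⟨hnd1, hnd2, hdisj12⟩ := hnd'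
    have hxl1 : x ∉ l1 := fun h => hdisj12 x h x List.mem_cons_self rfl
    have hxl2 : x ∉ l2 := (List.nodup_cons.1 hnd2).1
    rw [List.foldl_append, List.foldl_cons]
    set s1 := l1.foldl ins t with hs1def
    have hbst1 : s1.isBST := foldl_bst l1 t ht
    have hsubt1 : t.nodes ⊆ s1.nodes := by
      rw [hs1def, foldl_nodes]; exact Finset.subset_union_left
    have step1 : (l2.foldl ins (ins s1 x)).sig x = (ins s1 x).sig x := by
      refine foldl_sig t x l2 (ins s1 x) (isBST_ins s1 x hbst1) ?_ ?_
      · intro a ha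
        rw [nodes_ins]
        exact Finset.mem_insert_of_mem (hsubt1 ha)
      · intro y hy
        refine hbet x hx y (hmemI y (by simp [hy])) ?_
        rintro rfl; exact hxl2 hy
    have step2 : (ins s1 x).sig x = s1.sig x := sig_ins_self s1 x
    have step3 : s1.sig x = t.sig x := by
      refine foldl_sig t x l1 t ht (le_refl _) ?_
      intro y hy
      refine hbet x hx y (hmemI y (by simp [hy])) ?_
      rintro rfl; exact hxl1 hy
    rw [step1, step2, step3]
  refine ⟨hsig_old, ?_⟩
  rw [height]
  apply Finset.sup_le
  intro x hx
  rw [foldl_nodes, hfin, Finset.mem_union] at hx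
  rcases hx with hx | hx
  · rw [hsig_old x hx]
    have h1 := Finset.le_sup (f := fun x => (t.sig x).length) hx
    have : (t.sig x).length ≤ t.height := h1
    omega
  · rw [hsig_new x hx]
    exact sig_length_le t ht x
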